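/- arXiv:1303.0581 — 2 statements merged into one kernel-verified Lean document; each statement's English description precedes it below -/
import Mathlib

section
/- With the sets G₁, …, G_k and ℍ as in the context, define H_ℓ = {ξ ∈ {0,2}^ℤ : σ^s(ξ) ∈ G_ℓ for every s ∈ ℤ} for 1 ≤ ℓ ≤ k. Then H_ℓ = ℍ ∩ G_ℓ for every ℓ, the sets H₁, …, H_k are pairwise disjoint, and ℍ = H₁ ∪ ⋯ ∪ H_k. -/
/-!
Bi-infinite sequences over the alphabet {0,2} are modeled as `ξ : ℤ → Bool`, where
`true` represents the symbol `2` and `false` represents the symbol `0`.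
-/

/-- The number of occurrences of the symbol `2` in the window of length `L`
starting at position `m` of the finite word `w`. -/
def winCount (w : List Bool) (m L : ℕ) : ℕ := ((w.drop m).take L).count true

/-- A finite word `w` over `{0,2}` is `(i,j,L)`-admissible if every sub-word of `L`
consecutive letters contains at least `i` and at most `j` occurrences of the symbol `2`. -/
def Admissible (i j L : ℕ) (w : List Bool) : Prop :=
  ∀ m, m + L ≤ w.length → i ≤ winCount w m L ∧ winCount w m L ≤ j

/-- The shift by `s ∈ ℤ` on `{0,2}^ℤ` (`zshift 1` is the left shift `σ`). -/
def zshift (s : ℤ) (ξ : ℤ → Bool) : ℤ → Bool := fun n => ξ (n + s)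

/-- The finite word `ξ₀ ξ₁ ⋯ ξ_{L−1}` of a bi-infinite sequence `ξ`. -/
def initialWord (L : ℕ) (ξ : ℤ → Bool) : List Bool :=
  List.ofFn fun r : Fin L => ξ ((r : ℕ) : ℤ)

/-- Number of `true`s among `ξ a, ξ (a+1), …, ξ (a+n-1)`. -/
def zcnt (ξ : ℤ → Bool) (a : ℤ) : ℕ → ℕ
  | 0 => 0
  | n + 1 => zcnt ξ a n + (if ξ (a + n) then 1 else 0)

lemma zcnt_succ (ξ : ℤ → Bool) (a : ℤ) (n : ℕ) :
    zcnt ξ a (n + 1) = zcnt ξ a n + (if ξ (a + n) then 1 else 0) := rfl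

lemma zcnt_front (ξ : ℤ → Bool) (a : ℤ) (n : ℕ) :
    zcnt ξ a (n + 1) = (if ξ a then 1 else 0) + zcnt ξ (a + 1) n := by
  induction n with
  | zero => simp [zcnt]
  | succ n ih =>
      rw [zcnt_succ, ih, zcnt_succ]
      have h1 : a + ((n : ℤ) + 1) = a + 1 + n := by ring
      push_cast
      rw [h1]
      omega

lemma zcnt_between (ξ : ℤ → Bool) (a : ℤ) {n m : ℕ} (h : n ≤ m) :
    zcnt ξ a n ≤ zcnt ξ a m ∧ zcnt ξ a m ≤ zcnt ξ a n + (m - n) := by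
  induction m with
  | zero =>
      have : n = 0 := by omega
      subst this; simp
  | succ m ih =>
      rcases Nat.lt_or_ge n (m + 1) with h' | h'
      · have hmn : n ≤ m := by omega
        have := ih hmn
        have he : (if ξ (a + m) then 1 else 0) ≤ 1 := by split <;> omega
        rw [zcnt_succ]
        omega
      · have : n = m + 1 := by omega
        subst this; simp

lemma zcnt_zshift (ξ : ℤ → Bool) (s a : ℤ) (n : ℕ) :
    zcnt (zshift s ξ) a n = zcnt ξ (a + s) n := by
  induction n with
  | zero => rfl
  | succ n ih =>
      rw [zcnt_succ, zcnt_succ, ih]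
      have h1 : a + (n : ℤ) + s = a + s + n := by ring
      simp [zshift, h1]

lemma zshift_zero (ξ : ℤ → Bool) : zshift 0 ξ = ξ := by
  funext n; simp [zshift]

lemma count_initialWord (n : ℕ) : ∀ ξ : ℤ → Bool,
    (initialWord n ξ).count true = zcnt ξ 0 n := by
  induction n with
  | zero => intro ξ; simp [initialWord, zcnt]
  | succ n ih =>
      intro ξ
      rw [initialWord, List.ofFn_succ]
      have htail : (List.ofFn fun i : Fin n => ξ (((i.succ : Fin (n + 1)) : ℕ) : ℤ))
          = initialWord n (zshift 1 ξ) := by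
        unfold initialWord
        have : (fun i : Fin n => ξ (((i.succ : Fin (n + 1)) : ℕ) : ℤ))
            = fun r : Fin n => zshift 1 ξ ((r : ℕ) : ℤ) := by
          funext r
          simp only [zshift, Fin.val_succ]
          norm_cast
        rw [this]
      rw [List.count_cons, htail, ih]
      have hz : zcnt (zshift 1 ξ) 0 n = zcnt ξ 1 n := by
        rw [zcnt_zshift]; norm_num
      rw [hz, zcnt_front ξ 0 n]
      simp [Nat.add_comm]

lemma admissible_iff {i j n : ℕ} {w : List Bool} (hw : w.length = n) :
    Admissible i j n w ↔ (i ≤ w.count true ∧ w.count true ≤ j) := by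
  subst hw
  have hwin : winCount w 0 w.length = w.count true := by
    simp [winCount]
  constructor
  · intro h
    have := h 0 (by omega)
    rwa [hwin] at this
  · intro h m hm
    have : m = 0 := by omega
    subst this
    rwa [hwin]

/-- with `G₁, …, G_k`, `ℍ` and `H_ℓ = ⋂_{s∈ℤ} σ^s(G_ℓ)` as in the
construction, one has `H_ℓ = ℍ ∩ G_ℓ`, the sets `H₁, …, H_k` are pairwise disjoint,
and `ℍ = H₁ ∪ ⋯ ∪ H_k`. -/
theorem H_decomposition
    (k : ℕ) (hk : 1 ≤ k) (L i j : ℕ → ℕ)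
    (hLmono : ∀ ℓ, 1 ≤ ℓ → ℓ < k → L ℓ < L (ℓ + 1))
    (hL1 : 3 * k + 1 < L 1)
    (hi1 : i 1 = 0) (hj1 : j 1 = L 1 - (3 * k + 1))
    (hj : ∀ ℓ, 2 ≤ ℓ → ℓ ≤ k → j ℓ = L ℓ - (3 * (k - ℓ) + 4))
    (hi : ∀ ℓ, 2 ≤ ℓ → ℓ ≤ k → i ℓ = j ℓ - 1)
    (hipos : ∀ ℓ, 2 ≤ ℓ → ℓ ≤ k → 1 ≤ i ℓ)
    (hLi : ∀ ℓ, 1 ≤ ℓ → ℓ < k → L ℓ < i (ℓ + 1))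
    (G : ℕ → Set (ℤ → Bool))
    (hG : ∀ ℓ, G ℓ = {ξ | Admissible (i ℓ) (j ℓ) (L ℓ) (initialWord (L ℓ) ξ)})
    (H : Set (ℤ → Bool))
    (hH : H = {ξ | ∀ s : ℤ, ∃ ℓ, 1 ≤ ℓ ∧ ℓ ≤ k ∧ zshift s ξ ∈ G ℓ})
    (Hl : ℕ → Set (ℤ → Bool))
    (hHl : ∀ ℓ, Hl ℓ = {ξ | ∀ s : ℤ, zshift s ξ ∈ G ℓ}) :
    (∀ ℓ, 1 ≤ ℓ → ℓ ≤ k → Hl ℓ = H ∩ G ℓ) ∧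
    (∀ ℓ m, 1 ≤ ℓ → ℓ ≤ k → 1 ≤ m → m ≤ k → ℓ ≠ m → Disjoint (Hl ℓ) (Hl m)) ∧
    H = ⋃ ℓ ∈ Set.Icc 1 k, Hl ℓ := by
  -- membership in `G ℓ` is a count condition on the initial window
  have memG : ∀ ℓ (η : ℤ → Bool),
      η ∈ G ℓ ↔ (i ℓ ≤ zcnt η 0 (L ℓ) ∧ zcnt η 0 (L ℓ) ≤ j ℓ) := by
    intro ℓ η
    rw [hG ℓ, Set.mem_setOf_eq,
      admissible_iff (by simp [initialWord] : (initialWord (L ℓ) η).length = L ℓ),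
      count_initialWord]
  have memG' : ∀ ℓ (η : ℤ → Bool) (s : ℤ),
      zshift s η ∈ G ℓ ↔ (i ℓ ≤ zcnt η s (L ℓ) ∧ zcnt η s (L ℓ) ≤ j ℓ) := by
    intro ℓ η s
    rw [memG, zcnt_zshift, zero_add]
  -- parameter facts
  have hp1 : L 1 = j 1 + (3 * k + 1) := by omega
  have hp : ∀ ℓ, 2 ≤ ℓ → ℓ ≤ k →
      L ℓ = i ℓ + 1 + (3 * (k - ℓ) + 4) ∧ j ℓ = i ℓ + 1 ∧ 1 ≤ i ℓ := by
    intro ℓ h2 hℓk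
    have a := hj ℓ h2 hℓk
    have b := hi ℓ h2 hℓk
    have c := hipos ℓ h2 hℓk
    omega
  -- strict monotonicity of `L` on `[1, k]`
  have hLlt : ∀ m, m ≤ k → ∀ ℓ, 1 ≤ ℓ → ℓ < m → L ℓ < L m := by
    intro m
    induction m with
    | zero => omega
    | succ m ih =>
        intro hmk ℓ hℓ hlt
        rcases Nat.lt_or_ge ℓ m with h | h
        · exact lt_trans (ih (by omega) ℓ hℓ h) (hLmono m (by omega) (by omega))
        · have : ℓ = m := by omega
          subst this
          exact hLmono ℓ hℓ (by omega)
  -- positivity of window lengths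
  have hLpos : ∀ ℓ, 1 ≤ ℓ → ℓ ≤ k → 3 * k + 1 < L ℓ := by
    intro ℓ h1 h2
    rcases Nat.lt_or_ge 1 ℓ with h | h
    · have := hLlt ℓ h2 1 le_rfl h
      omega
    · have : ℓ = 1 := by omega
      subst this
      exact hL1
  -- distinct G's (with indices in range) are disjoint
  have key0 : ∀ ℓ m (η : ℤ → Bool), 1 ≤ ℓ → m ≤ k → ℓ < m →
      η ∈ G ℓ → η ∈ G m → False := by
    intro ℓ m η hℓ hmk hlt h1 h2
    rw [memG] at h1 h2
    have hLle : L ℓ ≤ L m := le_of_lt (hLlt m hmk ℓ hℓ hlt)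
    have hb := zcnt_between η 0 hLle
    have pm := hp m (by omega) hmk
    rcases Nat.lt_or_ge ℓ 2 with h | h
    · have hℓ1 : ℓ = 1 := by omega
      subst hℓ1
      omega
    · have pℓ := hp ℓ h (by omega)
      omega
  have hGuniq : ∀ ℓ m (η : ℤ → Bool), 1 ≤ ℓ → ℓ ≤ k → 1 ≤ m → m ≤ k →
      η ∈ G ℓ → η ∈ G m → ℓ = m := by
    intro ℓ m η h1 h2 h3 h4 hm1 hm2
    rcases lt_trichotomy ℓ m with h | h | h
    · exact absurd (key0 ℓ m η h1 h4 h hm1 hm2) (not_false)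
    · exact h
    · exact absurd (key0 m ℓ η h3 h2 h hm2 hm1) (not_false)
  -- adjacent shifts lie in the same G
  have key1 : ∀ (η : ℤ → Bool) (s : ℤ) ℓ m, 1 ≤ ℓ → ℓ ≤ k → 1 ≤ m → m ≤ k →
      zshift s η ∈ G ℓ → zshift (s + 1) η ∈ G m → ℓ = m := by
    intro η s ℓ m hℓ1 hℓk hm1 hmk h1 h2
    rw [memG'] at h1 h2
    have hLℓpos : 1 ≤ L ℓ := by have := hLpos ℓ hℓ1 hℓk; omega
    have efront : zcnt η s (L ℓ) = (if η s then 1 else 0) + zcnt η (s + 1) (L ℓ - 1) := by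
      obtain ⟨n, hn⟩ : ∃ n, L ℓ = n + 1 := ⟨L ℓ - 1, by omega⟩
      rw [hn]
      simpa using zcnt_front η s n
    have hif : (if η s then 1 else 0) ≤ 1 := by split <;> omega
    rcases lt_trichotomy ℓ m with hlt | heq | hlt
    · exfalso
      have hLlt' : L ℓ < L m := hLlt m hmk ℓ hℓ1 hlt
      have hstep := zcnt_between η (s + 1) (show L ℓ - 1 ≤ L m by omega)
      have pm := hp m (by omega) hmk
      rcases Nat.lt_or_ge ℓ 2 with h | h
      · have hℓ1' : ℓ = 1 := by omega
        subst hℓ1'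
        omega
      · have pℓ := hp ℓ h hℓk
        omega
    · exact heq
    · exfalso
      have hLlt' : L m < L ℓ := hLlt ℓ hℓk m hm1 hlt
      have hstep := zcnt_between η (s + 1) (show L m ≤ L ℓ - 1 by omega)
      have pℓ := hp ℓ (by omega) hℓk
      rcases Nat.lt_or_ge m 2 with h | h
      · have hm1' : m = 1 := by omega
        subst hm1'
        omega
      · have pm := hp m h hmk
        omega
  -- every element of H lies in some Hl
  have hHsub : ∀ ξ, ξ ∈ H → ∃ ℓ, 1 ≤ ℓ ∧ ℓ ≤ k ∧ ξ ∈ Hl ℓ ∧ ξ ∈ G ℓ := by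
    intro ξ hξ
    rw [hH, Set.mem_setOf_eq] at hξ
    choose f hf1 hf2 hf3 using hξ
    have hstep : ∀ s : ℤ, f s = f (s + 1) := fun s =>
      key1 ξ s (f s) (f (s + 1)) (hf1 s) (hf2 s) (hf1 (s + 1)) (hf2 (s + 1))
        (hf3 s) (hf3 (s + 1))
    have hconst : ∀ s : ℤ, f s = f 0 := by
      intro s
      induction s using Int.induction_on with
      | zero => rfl
      | succ n ih => rw [← hstep (n : ℤ), ih]
      | pred n ih =>
          have := hstep (-(n : ℤ) - 1)
          rw [show (-(n : ℤ) - 1 + 1) = -(n : ℤ) by ring] at this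
          rw [this, ih]
    refine ⟨f 0, hf1 0, hf2 0, ?_, ?_⟩
    · rw [hHl, Set.mem_setOf_eq]
      intro s
      have := hf3 s
      rwa [hconst s] at this
    · have := hf3 0
      rwa [zshift_zero] at this
  have hHlsubH : ∀ ℓ, 1 ≤ ℓ → ℓ ≤ k → Hl ℓ ⊆ H := by
    intro ℓ h1 h2 ξ hξ
    rw [hHl, Set.mem_setOf_eq] at hξ
    rw [hH, Set.mem_setOf_eq]
    exact fun s => ⟨ℓ, h1, h2, hξ s⟩
  refine ⟨?_, ?_, ?_⟩
  · -- Hl ℓ = H ∩ G ℓ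
    intro ℓ h1 h2
    ext ξ
    constructor
    · intro hξ
      refine ⟨hHlsubH ℓ h1 h2 hξ, ?_⟩
      rw [hHl, Set.mem_setOf_eq] at hξ
      have := hξ 0
      rwa [zshift_zero] at this
    · rintro ⟨hξH, hξG⟩
      obtain ⟨m, hm1, hm2, hHlm, hGm⟩ := hHsub ξ hξH
      have : m = ℓ := hGuniq m ℓ ξ hm1 hm2 h1 h2 hGm hξG
      rwa [this] at hHlm
  · -- pairwise disjoint
    intro ℓ m h1 h2 h3 h4 hne
    rw [Set.disjoint_left]
    intro ξ hξℓ hξm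
    rw [hHl, Set.mem_setOf_eq] at hξℓ hξm
    have hGℓ := hξℓ 0
    have hGm := hξm 0
    rw [zshift_zero] at hGℓ hGm
    exact hne (hGuniq ℓ m ξ h1 h2 h3 h4 hGℓ hGm)
  · -- H = union
    ext ξ
    simp only [Set.mem_iUnion, Set.mem_Icc, exists_prop]
    constructor
    · intro hξ
      obtain ⟨ℓ, h1, h2, hHlm, _⟩ := hHsub ξ hξ
      exact ⟨ℓ, ⟨h1, h2⟩, hHlm⟩
    · rintro ⟨ℓ, ⟨h1, h2⟩, hmem⟩
      exact hHlsubH ℓ h1 h2 hmem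
end

section
/- Let k ≥ 2 be an integer and β₀ > β₂ > 1 real numbers, and for 1 ≤ ℓ ≤ k let 0 ≤ i_ℓ < j_ℓ ≤ L_ℓ be integers with L_ℓ ≥ 1; put H_ℓ = H(i_ℓ, j_ℓ, L_ℓ) and define a_ℓ⁻ = (j_ℓ log β₂ + (L_ℓ − j_ℓ) log β₀)/L_ℓ and a_ℓ⁺ = (i_ℓ log β₂ + (L_ℓ − i_ℓ) log β₀)/L_ℓ. For every ℓ and every t ∈ ℝ the pressure P_ℓ(t) = P_{H_ℓ}(t) exists; write h_ℓ = P_ℓ(0), and for 1 ≤ ℓ ≤ k−1 set τ_ℓ⁻ = −(h_ℓ − h_{ℓ+1})/(a_{ℓ+1}⁻ − a_ℓ⁺) and τ_ℓ⁺ = −(h_ℓ − h_{ℓ+1})/(a_{ℓ+1}⁺ − a_ℓ⁻). Assume that h_{ℓ+1} < h_ℓ and a_ℓ⁺ < a_{ℓ+1}⁻ for every 1 ≤ ℓ ≤ k−1, and that τ_{ℓ+1}⁺ < τ_ℓ⁻ for every 1 ≤ ℓ ≤ k−2. Define ℙ(t) = max_{1≤ℓ≤k} P_ℓ(t). Then there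 exist real numbers t_{k−1} < t_{k−2} < ⋯ < t₁ < 0 such that: (i) ℙ(t) = P₁(t) > P_j(t) for all j ≠ 1 and all t > t₁; (ii) for each 2 ≤ ℓ ≤ k−1, ℙ(t) = P_ℓ(t) > P_j(t) for all j ≠ ℓ and all t ∈ (t_ℓ, t_{ℓ−1}); (iii) ℙ(t) = P_k(t) > P_j(t) for all j ≠ k and all t < t_{k−1}; (iv) for each 1 ≤ ℓ ≤ k−1 the one-sided derivatives of the convex function ℙ at t_ℓ satisfy D⁻ℙ(t_ℓ) ≤ −a_{ℓ+1}⁻ < −a_ℓ⁺ ≤ D⁺ℙ(t_ℓ); in particular ℙ is not differentiable at any of the points t₁, …, t_{k−1}. -/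
open Filter

/-!
Bi-infinite sequences over the alphabet {0,2} are modeled as `ξ : ℤ → Bool`, where
`true` represents the symbol `2` and `false` represents the symbol `0`.
-/

/-- Number of occurrences of the symbol `2` in the window `ξ_m ξ_{m+1} ⋯ ξ_{m+L-1}`. -/
def zwinCount (ξ : ℤ → Bool) (m : ℤ) (L : ℕ) : ℕ :=
  ((Finset.range L).filter fun r : ℕ => ξ (m + (r : ℤ)) = true).card

/-- The subshift `H(i,j,L)`. -/
def Hset (i j L : ℕ) : Set (ℤ → Bool) :=
  {ξ | ∀ m : ℤ, i ≤ zwinCount ξ m L ∧ zwinCount ξ m L ≤ j}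

/-- The word `w ∈ {0,2}^n` occurs in a point of `X`. -/
def WordOccurs (X : Set (ℤ → Bool)) {n : ℕ} (w : Fin n → Bool) : Prop :=
  ∃ ξ ∈ X, ∃ m : ℤ, ∀ r : Fin n, w r = ξ (m + (r : ℕ))

open Classical in
/-- The partition function `Z_n(X,t) = Σ_{w ∈ W_n(X)} (β₀^{n₀(w)} β₂^{n₂(w)})^{−t}`. -/
noncomputable def Zfun (β₀ β₂ : ℝ) (X : Set (ℤ → Bool)) (t : ℝ) (n : ℕ) : ℝ :=
  ∑ w : Fin n → Bool,
    if WordOccurs X w then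
      ((β₀ ^ (Finset.univ.filter fun r => w r = false).card) *
        (β₂ ^ (Finset.univ.filter fun r => w r = true).card)) ^ (-t)
    else 0

/-- The pressure `P_X(t) = lim_{n→∞} (1/n) log Z_n(X,t)` (whenever the limit exists,
`limUnder` picks it out). -/
noncomputable def pressureOf (β₀ β₂ : ℝ) (X : Set (ℤ → Bool)) (t : ℝ) : ℝ :=
  limUnder atTop (fun n : ℕ => Real.log (Zfun β₀ β₂ X t n) / n)


/-! ### counting lemmas -/

/-- number of `true`s in the word, as a count over `Fin n`. -/
noncomputable def n2c {n : ℕ} (w : Fin n → Bool) : ℕ :=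
  (Finset.univ.filter fun r => w r = true).card

noncomputable def n0c {n : ℕ} (w : Fin n → Bool) : ℕ :=
  (Finset.univ.filter fun r => w r = false).card

lemma n0c_add_n2c {n : ℕ} (w : Fin n → Bool) : n0c w + n2c w = n := by
  classical
  have := Finset.card_filter_add_card_filter_not
    (s := (Finset.univ : Finset (Fin n))) (p := fun r => w r = true)
  simp only [Finset.card_univ, Fintype.card_fin] at this
  have h2 : (Finset.univ.filter fun r : Fin n => ¬ w r = true) =
      (Finset.univ.filter fun r : Fin n => w r = false) := by
    apply Finset.filter_congr; intro x _; simp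
  rw [h2] at this
  rw [n0c, n2c, add_comm]
  exact this

lemma zwin_add (ξ : ℤ → Bool) (m : ℤ) (a b : ℕ) :
    zwinCount ξ m (a + b) = zwinCount ξ m a + zwinCount ξ (m + a) b := by
  classical
  unfold zwinCount
  rw [Finset.range_add, Finset.filter_union, Finset.card_union_of_disjoint, Finset.filter_map,
    Finset.card_map]
  · congr 1
    congr 1
    apply Finset.filter_congr
    intro x _
    simp only [Function.comp, addLeftEmbedding_apply]
    constructor <;> intro h <;>
      · convert h using 2; push_cast; ring
  · apply Finset.disjoint_filter_filter
    simp [Finset.disjoint_left, addLeftEmbedding]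
    intro x hx y _ h
    omega

lemma zwin_le (ξ : ℤ → Bool) (m : ℤ) (a : ℕ) : zwinCount ξ m a ≤ a := by
  unfold zwinCount
  exact le_trans (Finset.card_filter_le _ _) (by simp)

lemma zwin_mul {i j L : ℕ} {ξ : ℤ → Bool} (hξ : ξ ∈ Hset i j L) (m : ℤ) (q : ℕ) :
    q * i ≤ zwinCount ξ m (q * L) ∧ zwinCount ξ m (q * L) ≤ q * j := by
  induction q generalizing m with
  | zero => simp [zwinCount]
  | succ q ih =>
    have h1 : (q + 1) * L = L + q * L := by ring
    rw [h1, zwin_add]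
    have h2 := hξ m
    have h3 := ih (m + L)
    constructor <;> nlinarith [h2.1, h2.2, h3.1, h3.2]

lemma zwin_bounds {i j L : ℕ} {ξ : ℤ → Bool} (hξ : ξ ∈ Hset i j L) (m : ℤ) (n : ℕ) :
    (n / L) * i ≤ zwinCount ξ m n ∧ zwinCount ξ m n ≤ (n / L) * j + (n % L) := by
  have hn : n = (n / L) * L + n % L := by
    have h := Nat.div_add_mod n L; rw [Nat.mul_comm] at h; linarith
  constructor
  · calc (n / L) * i ≤ zwinCount ξ m ((n / L) * L) := (zwin_mul hξ m _).1
      _ ≤ zwinCount ξ m n := by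
          conv_rhs => rw [hn]
          rw [zwin_add]; omega
  · conv_lhs => rw [hn]
    rw [zwin_add]
    have := (zwin_mul hξ m (n / L)).2
    have := zwin_le ξ (m + ((n / L) * L : ℕ)) (n % L)
    omega

def perPoint (jj L : ℕ) : ℤ → Bool := fun n => decide (n % (L : ℤ) < (jj : ℤ))

lemma emod_sub_emod (a b n : ℤ) : (a % n - b) % n = (a - b) % n := by
  rw [Int.sub_emod, Int.emod_emod_of_dvd _ dvd_rfl, ← Int.sub_emod]

lemma perPoint_zwin {jj L : ℕ} (hL : 1 ≤ L) (m : ℤ) (hjL : jj ≤ L) :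
    zwinCount (perPoint jj L) m L = jj := by
  classical
  have hL0 : (0 : ℤ) < (L : ℤ) := by exact_mod_cast hL
  unfold zwinCount
  have key : ((Finset.range L).filter fun r : ℕ => perPoint jj L (m + (r : ℤ)) = true).card
      = ((Finset.range L).filter fun s : ℕ => s < jj).card := by
    refine Finset.card_nbij' (fun r => ((m + (r : ℤ)) % (L : ℤ)).toNat)
      (fun s => (((s : ℤ) - m) % (L : ℤ)).toNat) ?_ ?_ ?_ ?_
    · intro r hr
      simp only [Finset.mem_coe, Finset.mem_filter, Finset.mem_range, perPoint, decide_eq_true_eq] at hr ⊢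
      have h0 : 0 ≤ (m + (r : ℤ)) % (L : ℤ) := Int.emod_nonneg _ (by omega)
      exact ⟨by omega, by omega⟩
    · intro s hs
      simp only [Finset.mem_coe, Finset.mem_filter, Finset.mem_range] at hs ⊢
      have h0 : 0 ≤ ((s : ℤ) - m) % (L : ℤ) := Int.emod_nonneg _ (by omega)
      have h1 : ((s : ℤ) - m) % (L : ℤ) < (L : ℤ) := Int.emod_lt_of_pos _ hL0
      refine ⟨by omega, ?_⟩
      simp only [perPoint, decide_eq_true_eq]
      have key2 : (m + ((((s : ℤ) - m) % (L : ℤ)).toNat : ℤ)) % (L : ℤ) = (s : ℤ) % (L : ℤ) := by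
        rw [Int.toNat_of_nonneg h0, Int.add_emod_emod]
        congr 1; ring
      rw [key2, Int.emod_eq_of_lt (by positivity) (by exact_mod_cast hs.1)]
      exact_mod_cast hs.2
    · intro r hr
      simp only [Finset.mem_coe, Finset.mem_filter, Finset.mem_range] at hr
      have h0 : 0 ≤ (m + (r : ℤ)) % (L : ℤ) := Int.emod_nonneg _ (by omega)
      have key2 : ((((m + (r : ℤ)) % (L : ℤ)).toNat : ℤ) - m) % (L : ℤ) = (r : ℤ) % (L : ℤ) := by
        rw [Int.toNat_of_nonneg h0, emod_sub_emod]
        congr 1; ring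
      beta_reduce
      rw [key2, Int.emod_eq_of_lt (by positivity) (by exact_mod_cast hr.1)]
      simp
    · intro s hs
      simp only [Finset.mem_coe, Finset.mem_filter, Finset.mem_range] at hs
      have h0 : 0 ≤ ((s : ℤ) - m) % (L : ℤ) := Int.emod_nonneg _ (by omega)
      have key2 : (m + ((((s : ℤ) - m) % (L : ℤ)).toNat : ℤ)) % (L : ℤ) = (s : ℤ) % (L : ℤ) := by
        rw [Int.toNat_of_nonneg h0, Int.add_emod_emod]
        congr 1; ring
      beta_reduce
      rw [key2, Int.emod_eq_of_lt (by positivity) (by exact_mod_cast lt_of_lt_of_le hs.2 hjL)]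
      simp
  rw [key]
  have : (Finset.range L).filter (fun s : ℕ => s < jj) = Finset.range jj := by
    ext x; simp only [Finset.mem_filter, Finset.mem_range]; omega
  rw [this, Finset.card_range]

lemma perPoint_mem {i jj L : ℕ} (hL : 1 ≤ L) (hij : i ≤ jj) (hjL : jj ≤ L) :
    perPoint jj L ∈ Hset i jj L := by
  intro m
  rw [perPoint_zwin hL m hjL]
  exact ⟨hij, le_rfl⟩

lemma exists_word {i jj L : ℕ} (hL : 1 ≤ L) (hij : i ≤ jj) (hjL : jj ≤ L) (n : ℕ) :
    WordOccurs (Hset i jj L) (fun r : Fin n => perPoint jj L (r : ℕ)) := by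
  refine ⟨perPoint jj L, perPoint_mem hL hij hjL, 0, fun r => ?_⟩
  simp

noncomputable def wE (β₀ β₂ : ℝ) {n : ℕ} (w : Fin n → Bool) : ℝ :=
  (n0c w : ℝ) * Real.log β₀ + (n2c w : ℝ) * Real.log β₂

open Classical in
lemma Zfun_eq (β₀ β₂ : ℝ) (h0 : 0 < β₂) (h1 : β₂ < β₀) (X : Set (ℤ → Bool)) (t : ℝ) (n : ℕ) :
    Zfun β₀ β₂ X t n =
      ∑ w : Fin n → Bool, if WordOccurs X w then Real.exp (-(t * wE β₀ β₂ w)) else 0 := by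
  have hb0 : 0 < β₀ := lt_trans h0 h1
  unfold Zfun
  apply Finset.sum_congr rfl
  intro w _
  split_ifs with h
  · rw [Real.rpow_def_of_pos (by positivity)]
    rw [Real.log_mul (by positivity) (by positivity), Real.log_pow, Real.log_pow]
    unfold wE n0c n2c
    ring_nf
  · rfl

/-- splitting a word into its first and second parts -/
def wsplit (a b : ℕ) (w : Fin (a + b) → Bool) : (Fin a → Bool) × (Fin b → Bool) :=
  (fun r => w (Fin.castAdd b r), fun r => w (Fin.natAdd a r))

lemma wsplit_inj (a b : ℕ) : Function.Injective (wsplit a b) := by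
  intro w w' h
  funext q
  have h1 := congrArg Prod.fst h
  have h2 := congrArg Prod.snd h
  simp only [wsplit] at h1 h2
  refine Fin.addCases (fun r => ?_) (fun r => ?_) q
  · exact congrFun h1 r
  · exact congrFun h2 r

lemma n2c_split (a b : ℕ) (w : Fin (a + b) → Bool) :
    n2c w = n2c (wsplit a b w).1 + n2c (wsplit a b w).2 := by
  classical
  unfold n2c wsplit
  simp only [Finset.card_filter]
  rw [← Fintype.sum_equiv finSumFinEquiv
    (fun x => if w (finSumFinEquiv x) = true then 1 else 0)
    (fun q => if w q = true then 1 else 0) (fun x => rfl)]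
  rw [Fintype.sum_sum_type]
  simp [-Finset.sum_boole, Finset.card_filter]
  congr

lemma n0c_split (a b : ℕ) (w : Fin (a + b) → Bool) :
    n0c w = n0c (wsplit a b w).1 + n0c (wsplit a b w).2 := by
  classical
  unfold n0c wsplit
  simp only [Finset.card_filter]
  rw [← Fintype.sum_equiv finSumFinEquiv
    (fun x => if w (finSumFinEquiv x) = false then 1 else 0)
    (fun q => if w q = false then 1 else 0) (fun x => rfl)]
  rw [Fintype.sum_sum_type]
  simp [-Finset.sum_boole, Finset.card_filter]
  congr

lemma wE_split (β₀ β₂ : ℝ) (a b : ℕ) (w : Fin (a + b) → Bool) :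
    wE β₀ β₂ w = wE β₀ β₂ (wsplit a b w).1 + wE β₀ β₂ (wsplit a b w).2 := by
  unfold wE
  rw [n2c_split, n0c_split]
  push_cast
  ring

lemma occurs_split {X : Set (ℤ → Bool)} (a b : ℕ) (w : Fin (a + b) → Bool) (hw : WordOccurs X w) :
    WordOccurs X (wsplit a b w).1 ∧ WordOccurs X (wsplit a b w).2 := by
  obtain ⟨ξ, hξ, m, hm⟩ := hw
  constructor
  · refine ⟨ξ, hξ, m, fun r => ?_⟩
    have := hm (Fin.castAdd b r)
    simpa [wsplit] using this
  · refine ⟨ξ, hξ, m + a, fun r => ?_⟩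
    have := hm (Fin.natAdd a r)
    simp only [wsplit]
    rw [this]
    congr 1
    push_cast [Fin.coe_natAdd]
    ring

/-! ### the pressure of `Hset i j L` -/

noncomputable def Acoef (β₀ β₂ : ℝ) (c L : ℕ) : ℝ :=
  ((c : ℝ) * Real.log β₂ + ((L - c : ℕ) : ℝ) * Real.log β₀) / (L : ℝ)

noncomputable def press (β₀ β₂ : ℝ) (i j L : ℕ) (t : ℝ) : ℝ :=
  pressureOf β₀ β₂ (Hset i j L) t

section PressureFacts

variable {β₀ β₂ : ℝ} {i j L : ℕ}

lemma wE_nonneg (hβ2 : 1 < β₂) (hβ : β₂ < β₀) {n : ℕ} (w : Fin n → Bool) :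
    0 ≤ wE β₀ β₂ w ∧ wE β₀ β₂ w ≤ (n : ℝ) * Real.log β₀ := by
  have l2 : 0 ≤ Real.log β₂ := Real.log_nonneg hβ2.le
  have l0 : Real.log β₂ ≤ Real.log β₀ := Real.log_le_log (x := β₂) (by linarith) hβ.le
  have hn := n0c_add_n2c w
  have hcast : (n0c w : ℝ) + (n2c w : ℝ) = (n : ℝ) := by exact_mod_cast congrArg Nat.cast hn
  unfold wE
  constructor
  · have : (0:ℝ) ≤ Real.log β₀ := le_trans l2 l0
    positivity
  · nlinarith [show (0:ℝ) ≤ (n0c w : ℝ) from Nat.cast_nonneg _, show (0:ℝ) ≤ (n2c w : ℝ) from Nat.cast_nonneg _]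

open Classical in
lemma Zfun_pos (hβ2 : 1 < β₂) (hβ : β₂ < β₀) (hL : 1 ≤ L) (hij : i ≤ j) (hjL : j ≤ L)
    (t : ℝ) (n : ℕ) : 0 < Zfun β₀ β₂ (Hset i j L) t n := by
  rw [Zfun_eq β₀ β₂ (by linarith) hβ]
  apply Finset.sum_pos'
  · intro w _
    split_ifs
    · positivity
    · exact le_refl 0
  · refine ⟨fun r : Fin n => perPoint j L (r : ℕ), Finset.mem_univ _, ?_⟩
    rw [if_pos (exists_word hL hij hjL n)]
    positivity

open Classical in
lemma Zfun_submul (hβ2 : 1 < β₂) (hβ : β₂ < β₀) (X : Set (ℤ → Bool)) (t : ℝ) (a b : ℕ) :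
    Zfun β₀ β₂ X t (a + b) ≤ Zfun β₀ β₂ X t a * Zfun β₀ β₂ X t b := by
  rw [Zfun_eq β₀ β₂ (by linarith) hβ, Zfun_eq β₀ β₂ (by linarith) hβ,
    Zfun_eq β₀ β₂ (by linarith) hβ]
  set f : (Fin a → Bool) → ℝ :=
    fun u => if WordOccurs X u then Real.exp (-(t * wE β₀ β₂ u)) else 0 with hf
  set g : (Fin b → Bool) → ℝ :=
    fun v => if WordOccurs X v then Real.exp (-(t * wE β₀ β₂ v)) else 0 with hg
  have hf0 : ∀ u : Fin a → Bool, 0 ≤ f u := by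
    intro u; simp only [hf]; split_ifs <;> positivity
  have hg0 : ∀ v : Fin b → Bool, 0 ≤ g v := by
    intro v; simp only [hg]; split_ifs <;> positivity
  have hfg : ∀ p : (Fin a → Bool) × (Fin b → Bool), 0 ≤ f p.1 * g p.2 := fun p =>
    mul_nonneg (hf0 p.1) (hg0 p.2)
  calc (∑ w : Fin (a+b) → Bool, if WordOccurs X w then Real.exp (-(t * wE β₀ β₂ w)) else 0)
      ≤ ∑ w : Fin (a+b) → Bool, f (wsplit a b w).1 * g (wsplit a b w).2 := by
        apply Finset.sum_le_sum
        intro w _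
        by_cases h : WordOccurs X w
        · rw [if_pos h]
          obtain ⟨h1, h2⟩ := occurs_split a b w h
          simp only [hf, hg, if_pos h1, if_pos h2]
          rw [wE_split β₀ β₂ a b w, ← Real.exp_add]
          apply le_of_eq
          congr 1
          ring
        · rw [if_neg h]
          exact hfg _
    _ = ∑ p ∈ Finset.univ.image (wsplit a b), f p.1 * g p.2 := by
        rw [Finset.sum_image (fun x _ y _ h => wsplit_inj a b h)]
    _ ≤ ∑ p : (Fin a → Bool) × (Fin b → Bool), f p.1 * g p.2 :=
        Finset.sum_le_sum_of_subset_of_nonneg (Finset.subset_univ _) (fun p _ _ => hfg p)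
    _ = (∑ u : Fin a → Bool, f u) * (∑ v : Fin b → Bool, g v) := by
        rw [Finset.sum_mul_sum]
        exact Fintype.sum_prod_type (f := fun p => f p.1 * g p.2)

open Classical in
lemma log_Zfun_lower (hβ2 : 1 < β₂) (hβ : β₂ < β₀) (hL : 1 ≤ L) (hij : i ≤ j) (hjL : j ≤ L)
    (t : ℝ) (n : ℕ) :
    -(|t| * Real.log β₀) * n ≤ Real.log (Zfun β₀ β₂ (Hset i j L) t n) := by
  have hl0 : 0 < Real.log β₀ := Real.log_pos (by linarith)
  set w0 : Fin n → Bool := fun r : Fin n => perPoint j L (r : ℕ) with hw0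
  have hterm : Real.exp (-(t * wE β₀ β₂ w0)) ≤ Zfun β₀ β₂ (Hset i j L) t n := by
    rw [Zfun_eq β₀ β₂ (by linarith) hβ]
    have := Finset.single_le_sum (f := fun w : Fin n → Bool =>
        if WordOccurs (Hset i j L) w then Real.exp (-(t * wE β₀ β₂ w)) else 0)
      (fun w _ => by beta_reduce; split_ifs <;> positivity) (Finset.mem_univ w0)
    beta_reduce at this
    rwa [if_pos (show WordOccurs (Hset i j L) w0 from exists_word hL hij hjL n)] at this
  have h1 : -(|t| * Real.log β₀) * n ≤ -(t * wE β₀ β₂ w0) := by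
    obtain ⟨he0, he1⟩ := wE_nonneg hβ2 hβ w0
    have : |t * wE β₀ β₂ w0| ≤ |t| * ((n : ℝ) * Real.log β₀) := by
      rw [abs_mul]
      apply mul_le_mul_of_nonneg_left _ (abs_nonneg t)
      rwa [abs_of_nonneg he0]
    have h2 := le_abs_self (t * wE β₀ β₂ w0)
    nlinarith
  calc -(|t| * Real.log β₀) * n ≤ -(t * wE β₀ β₂ w0) := h1
    _ = Real.log (Real.exp (-(t * wE β₀ β₂ w0))) := (Real.log_exp _).symm
    _ ≤ Real.log (Zfun β₀ β₂ (Hset i j L) t n) :=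
        Real.log_le_log (Real.exp_pos _) hterm

lemma log_Zfun_subadditive (hβ2 : 1 < β₂) (hβ : β₂ < β₀) (hL : 1 ≤ L) (hij : i ≤ j)
    (hjL : j ≤ L) (t : ℝ) :
    Subadditive (fun n => Real.log (Zfun β₀ β₂ (Hset i j L) t n)) := by
  intro a b
  rw [← Real.log_mul (ne_of_gt (Zfun_pos hβ2 hβ hL hij hjL t a))
    (ne_of_gt (Zfun_pos hβ2 hβ hL hij hjL t b))]
  exact Real.log_le_log (Zfun_pos hβ2 hβ hL hij hjL t (a + b))
    (Zfun_submul hβ2 hβ _ t a b)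

lemma press_tendsto (hβ2 : 1 < β₂) (hβ : β₂ < β₀) (hL : 1 ≤ L) (hij : i ≤ j) (hjL : j ≤ L)
    (t : ℝ) :
    Filter.Tendsto (fun n : ℕ => Real.log (Zfun β₀ β₂ (Hset i j L) t n) / n)
      Filter.atTop (nhds (press β₀ β₂ i j L t)) := by
  have hl0 : 0 < Real.log β₀ := Real.log_pos (by linarith)
  have hsub := log_Zfun_subadditive hβ2 hβ hL hij hjL t
  have hbdd : BddBelow (Set.range fun n : ℕ =>
      Real.log (Zfun β₀ β₂ (Hset i j L) t n) / n) := by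
    refine ⟨-(|t| * Real.log β₀), ?_⟩
    rintro x ⟨n, rfl⟩
    rcases Nat.eq_zero_or_pos n with hn | hn
    · subst hn
      simp only [Nat.cast_zero, div_zero]
      nlinarith [abs_nonneg t]
    · have hn' : (0 : ℝ) < n := by exact_mod_cast hn
      rw [le_div_iff₀ hn']
      exact log_Zfun_lower hβ2 hβ hL hij hjL t n
  have ht := hsub.tendsto_lim hbdd
  have : press β₀ β₂ i j L t = hsub.lim := by
    unfold press pressureOf
    exact ht.limUnder_eq
  rwa [this]

lemma n2c_eq_zwin {n : ℕ} {w : Fin n → Bool} {ξ : ℤ → Bool} {m : ℤ}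
    (hm : ∀ r : Fin n, w r = ξ (m + (r : ℕ))) : n2c w = zwinCount ξ m n := by
  classical
  unfold n2c zwinCount
  apply Finset.card_bij (fun (a : Fin n) _ => (a : ℕ))
  · intro a ha
    simp only [Finset.mem_filter, Finset.mem_univ, true_and] at ha
    simp only [Finset.mem_filter, Finset.mem_range]
    exact ⟨a.isLt, by rw [← hm a]; exact ha⟩
  · intro a _ b _ h
    exact Fin.val_injective h
  · intro b hb
    simp only [Finset.mem_filter, Finset.mem_range] at hb
    refine ⟨⟨b, hb.1⟩, ?_, rfl⟩
    simp only [Finset.mem_filter, Finset.mem_univ, true_and]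
    rw [hm ⟨b, hb.1⟩]
    exact hb.2

set_option maxHeartbeats 1000000 in
lemma wE_occ_bounds (hβ2 : 1 < β₂) (hβ : β₂ < β₀) (hL : 1 ≤ L) (hiL : i ≤ L) (hjL : j ≤ L)
    {n : ℕ} {w : Fin n → Bool} (hw : WordOccurs (Hset i j L) w) :
    (n : ℝ) * Acoef β₀ β₂ j L - (L : ℝ) * Real.log β₀ ≤ wE β₀ β₂ w ∧
      wE β₀ β₂ w ≤ (n : ℝ) * Acoef β₀ β₂ i L + (L : ℝ) * Real.log β₀ := by
  obtain ⟨ξ, hξ, m, hm⟩ := hw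
  have hcnt : n2c w = zwinCount ξ m n := n2c_eq_zwin hm
  obtain ⟨hz1, hz2⟩ := zwin_bounds (i := i) (j := j) (L := L) hξ m n
  have hL0 : (0 : ℝ) < (L : ℝ) := by exact_mod_cast hL
  have l2 : 0 < Real.log β₂ := Real.log_pos hβ2
  have l0 : Real.log β₂ < Real.log β₀ := Real.log_lt_log (by linarith) hβ
  set q : ℕ := n / L with hq
  set c : ℝ := (n2c w : ℝ) with hc
  have hc0 : 0 ≤ c := Nat.cast_nonneg _
  have hle : n2c w ≤ n := by
    have := n0c_add_n2c w; omega
  have hcn : c ≤ (n : ℝ) := by rw [hc]; exact_mod_cast hle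
  have hc1 : (q : ℝ) * (i : ℝ) ≤ c := by
    rw [hc, hcnt]; exact_mod_cast hz1
  have hc2 : c ≤ (q : ℝ) * (j : ℝ) + ((n % L : ℕ) : ℝ) := by
    rw [hc, hcnt]; exact_mod_cast hz2
  have hmod : ((n % L : ℕ) : ℝ) < (L : ℝ) := by exact_mod_cast Nat.mod_lt n hL
  have hmod0 : (0:ℝ) ≤ ((n % L : ℕ) : ℝ) := Nat.cast_nonneg _
  have hq1 : (q : ℝ) * (L : ℝ) ≤ (n : ℝ) := by exact_mod_cast Nat.div_mul_le_self n L
  have hnd : (L : ℝ) * ((n / L : ℕ) : ℝ) + ((n % L : ℕ) : ℝ) = (n : ℝ) := by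
    exact_mod_cast congrArg (Nat.cast : ℕ → ℝ) (Nat.div_add_mod n L)
  have hq2 : (n : ℝ) ≤ (q : ℝ) * (L : ℝ) + (L : ℝ) := by
    rw [hq]; push_cast at hnd ⊢; linarith
  have hwE : wE β₀ β₂ w = ((n : ℝ) - c) * Real.log β₀ + c * Real.log β₂ := by
    unfold wE
    rw [show n0c w = n - n2c w from by have := n0c_add_n2c w; omega, hc]
    push_cast [Nat.cast_sub hle]
    ring
  have hiLr : (i : ℝ) ≤ (L : ℝ) := by exact_mod_cast hiL
  have hjLr : (j : ℝ) ≤ (L : ℝ) := by exact_mod_cast hjL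
  have hi0 : (0 : ℝ) ≤ (i : ℝ) := Nat.cast_nonneg _
  have hj0 : (0 : ℝ) ≤ (j : ℝ) := Nat.cast_nonneg _
  have hq0 : (0 : ℝ) ≤ (q : ℝ) := Nat.cast_nonneg _
  have hAi : Acoef β₀ β₂ i L * (L : ℝ) =
      (i : ℝ) * Real.log β₂ + ((L : ℝ) - (i : ℝ)) * Real.log β₀ := by
    unfold Acoef; rw [Nat.cast_sub hiL]; field_simp
  have hAj : Acoef β₀ β₂ j L * (L : ℝ) =
      (j : ℝ) * Real.log β₂ + ((L : ℝ) - (j : ℝ)) * Real.log β₀ := by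
    unfold Acoef; rw [Nat.cast_sub hjL]; field_simp
  rw [hwE]
  constructor
  · -- lower bound; multiply through by L
    apply le_of_mul_le_mul_left _ hL0
    have hAj' : (L : ℝ) * ((n : ℝ) * Acoef β₀ β₂ j L) =
        (n : ℝ) * ((j : ℝ) * Real.log β₂ + ((L : ℝ) - (j : ℝ)) * Real.log β₀) := by
      rw [show (L : ℝ) * ((n : ℝ) * Acoef β₀ β₂ j L) =
        (n : ℝ) * (Acoef β₀ β₂ j L * (L : ℝ)) from by ring, hAj]
    -- key chain : L*c ≤ n*j + L*L, then multiply by (log β₀ - log β₂)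
    have k1 : (L : ℝ) * c ≤ (n : ℝ) * (j : ℝ) + (L : ℝ) * (L : ℝ) := by
      nlinarith [mul_le_mul_of_nonneg_left hc2 hL0.le, mul_le_mul_of_nonneg_right hq1 hj0]
    have k2 : (L : ℝ) * c * (Real.log β₀ - Real.log β₂) ≤
        ((n : ℝ) * (j : ℝ) + (L : ℝ) * (L : ℝ)) * (Real.log β₀ - Real.log β₂) :=
      mul_le_mul_of_nonneg_right k1 (by linarith)
    have k3 : ((n : ℝ) * (j : ℝ) + (L : ℝ) * (L : ℝ)) * (Real.log β₀ - Real.log β₂) ≤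
        (n : ℝ) * (j : ℝ) * (Real.log β₀ - Real.log β₂) + (L : ℝ) * (L : ℝ) * Real.log β₀ := by
      nlinarith [mul_pos hL0 hL0]
    linarith [hAj', k2, k3]
  · -- upper bound
    apply le_of_mul_le_mul_left _ hL0
    have hAi' : (L : ℝ) * ((n : ℝ) * Acoef β₀ β₂ i L) =
        (n : ℝ) * ((i : ℝ) * Real.log β₂ + ((L : ℝ) - (i : ℝ)) * Real.log β₀) := by
      rw [show (L : ℝ) * ((n : ℝ) * Acoef β₀ β₂ i L) =
        (n : ℝ) * (Acoef β₀ β₂ i L * (L : ℝ)) from by ring, hAi]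
    have k1 : (n : ℝ) * (i : ℝ) ≤ (L : ℝ) * c + (L : ℝ) * (L : ℝ) := by
      nlinarith [mul_le_mul_of_nonneg_right hq2 hi0, mul_le_mul_of_nonneg_left hc1 hL0.le]
    have k2 : (n : ℝ) * (i : ℝ) * (Real.log β₀ - Real.log β₂) ≤
        ((L : ℝ) * c + (L : ℝ) * (L : ℝ)) * (Real.log β₀ - Real.log β₂) :=
      mul_le_mul_of_nonneg_right k1 (by linarith)
    have k3 : ((L : ℝ) * c + (L : ℝ) * (L : ℝ)) * (Real.log β₀ - Real.log β₂) ≤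
        (L : ℝ) * c * (Real.log β₀ - Real.log β₂) + (L : ℝ) * (L : ℝ) * Real.log β₀ := by
      nlinarith [mul_pos hL0 hL0]
    linarith [hAi', k2, k3]

open Classical in
lemma Zfun_compare (hβ2 : 1 < β₂) (hβ : β₂ < β₀) (hL : 1 ≤ L) (hiL : i ≤ L) (hjL : j ≤ L)
    {t s : ℝ} (hts : t ≤ s) (n : ℕ) :
    Zfun β₀ β₂ (Hset i j L) s n *
        Real.exp ((s - t) * ((n : ℝ) * Acoef β₀ β₂ j L - (L : ℝ) * Real.log β₀))
      ≤ Zfun β₀ β₂ (Hset i j L) t n ∧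
    Zfun β₀ β₂ (Hset i j L) t n ≤ Zfun β₀ β₂ (Hset i j L) s n *
        Real.exp ((s - t) * ((n : ℝ) * Acoef β₀ β₂ i L + (L : ℝ) * Real.log β₀)) := by
  rw [Zfun_eq β₀ β₂ (by linarith) hβ, Zfun_eq β₀ β₂ (by linarith) hβ]
  rw [Finset.sum_mul, Finset.sum_mul]
  constructor
  · apply Finset.sum_le_sum
    intro w _
    by_cases h : WordOccurs (Hset i j L) w
    · rw [if_pos h, if_pos h, ← Real.exp_add]
      apply Real.exp_le_exp.2
      have := (wE_occ_bounds hβ2 hβ hL hiL hjL h).1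
      nlinarith [sub_nonneg.2 hts]
    · rw [if_neg h, if_neg h, zero_mul]
  · apply Finset.sum_le_sum
    intro w _
    by_cases h : WordOccurs (Hset i j L) w
    · rw [if_pos h, if_pos h, ← Real.exp_add]
      apply Real.exp_le_exp.2
      have := (wE_occ_bounds hβ2 hβ hL hiL hjL h).2
      nlinarith [sub_nonneg.2 hts]
    · rw [if_neg h, if_neg h, zero_mul]

lemma press_slope (hβ2 : 1 < β₂) (hβ : β₂ < β₀) (hL : 1 ≤ L) (hij : i ≤ j) (hiL : i ≤ L)
    (hjL : j ≤ L) {t s : ℝ} (hts : t ≤ s) :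
    Acoef β₀ β₂ j L * (s - t) ≤ press β₀ β₂ i j L t - press β₀ β₂ i j L s ∧
      press β₀ β₂ i j L t - press β₀ β₂ i j L s ≤ Acoef β₀ β₂ i L * (s - t) := by
  have hTt := press_tendsto hβ2 hβ hL hij hjL t
  have hTs := press_tendsto hβ2 hβ hL hij hjL s
  set u : ℝ → ℕ → ℝ := fun r n => Real.log (Zfun β₀ β₂ (Hset i j L) r n) with hu
  have hZpos : ∀ (r : ℝ) (n : ℕ), 0 < Zfun β₀ β₂ (Hset i j L) r n :=
    fun r n => Zfun_pos hβ2 hβ hL hij hjL r n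
  have hcomp : ∀ n : ℕ,
      u s n + (s - t) * ((n : ℝ) * Acoef β₀ β₂ j L - (L : ℝ) * Real.log β₀) ≤ u t n ∧
      u t n ≤ u s n + (s - t) * ((n : ℝ) * Acoef β₀ β₂ i L + (L : ℝ) * Real.log β₀) := by
    intro n
    obtain ⟨h1, h2⟩ := Zfun_compare (i := i) (j := j) hβ2 hβ hL hiL hjL hts n
    constructor
    · calc u s n + (s - t) * ((n : ℝ) * Acoef β₀ β₂ j L - (L : ℝ) * Real.log β₀)
          = Real.log (Zfun β₀ β₂ (Hset i j L) s n *
              Real.exp ((s - t) * ((n : ℝ) * Acoef β₀ β₂ j L - (L : ℝ) * Real.log β₀))) := by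
            rw [Real.log_mul (hZpos s n).ne' (Real.exp_pos _).ne', Real.log_exp]
        _ ≤ u t n := Real.log_le_log (mul_pos (hZpos s n) (Real.exp_pos _)) h1
    · calc u t n ≤ Real.log (Zfun β₀ β₂ (Hset i j L) s n *
              Real.exp ((s - t) * ((n : ℝ) * Acoef β₀ β₂ i L + (L : ℝ) * Real.log β₀))) :=
            Real.log_le_log (hZpos t n) h2
        _ = u s n + (s - t) * ((n : ℝ) * Acoef β₀ β₂ i L + (L : ℝ) * Real.log β₀) := by
            rw [Real.log_mul (hZpos s n).ne' (Real.exp_pos _).ne', Real.log_exp]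
  have hC0 : Filter.Tendsto (fun n : ℕ => (s - t) * ((L : ℝ) * Real.log β₀) / n)
      Filter.atTop (nhds 0) := tendsto_const_div_atTop_nhds_zero_nat _
  constructor
  · -- lower slope bound
    have hle : ∀ᶠ n : ℕ in Filter.atTop,
        u s n / n + (Acoef β₀ β₂ j L * (s - t) + -((s - t) * ((L : ℝ) * Real.log β₀) / n))
          ≤ u t n / n := by
      filter_upwards [Filter.eventually_ge_atTop 1] with n hn
      have hn0 : (0 : ℝ) < (n : ℝ) := by exact_mod_cast hn
      have h := (hcomp n).1
      have hdiv : (u s n + (s - t) * ((n : ℝ) * Acoef β₀ β₂ j L - (L : ℝ) * Real.log β₀)) / n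
          ≤ u t n / n := by gcongr
      have heq : (u s n + (s - t) * ((n : ℝ) * Acoef β₀ β₂ j L - (L : ℝ) * Real.log β₀)) / n
          = u s n / n + (Acoef β₀ β₂ j L * (s - t) +
            -((s - t) * ((L : ℝ) * Real.log β₀) / n)) := by
        field_simp
        ring
      rw [← heq]
      exact hdiv
    have hlim1 : Filter.Tendsto (fun n : ℕ => u s n / n +
        (Acoef β₀ β₂ j L * (s - t) + -((s - t) * ((L : ℝ) * Real.log β₀) / n)))
        Filter.atTop (nhds (press β₀ β₂ i j L s + (Acoef β₀ β₂ j L * (s - t) + -0))) :=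
      hTs.add (tendsto_const_nhds.add hC0.neg)
    have := le_of_tendsto_of_tendsto hlim1 hTt hle
    linarith
  · -- upper slope bound
    have hle : ∀ᶠ n : ℕ in Filter.atTop,
        u t n / n ≤ u s n / n +
          (Acoef β₀ β₂ i L * (s - t) + (s - t) * ((L : ℝ) * Real.log β₀) / n) := by
      filter_upwards [Filter.eventually_ge_atTop 1] with n hn
      have hn0 : (0 : ℝ) < (n : ℝ) := by exact_mod_cast hn
      have h := (hcomp n).2
      have hdiv : u t n / n ≤
          (u s n + (s - t) * ((n : ℝ) * Acoef β₀ β₂ i L + (L : ℝ) * Real.log β₀)) / n := by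
        gcongr
      have heq : (u s n + (s - t) * ((n : ℝ) * Acoef β₀ β₂ i L + (L : ℝ) * Real.log β₀)) / n
          = u s n / n + (Acoef β₀ β₂ i L * (s - t) +
            (s - t) * ((L : ℝ) * Real.log β₀) / n) := by
        field_simp
      rw [← heq]
      exact hdiv
    have hlim1 : Filter.Tendsto (fun n : ℕ => u s n / n +
        (Acoef β₀ β₂ i L * (s - t) + (s - t) * ((L : ℝ) * Real.log β₀) / n))
        Filter.atTop (nhds (press β₀ β₂ i j L s + (Acoef β₀ β₂ i L * (s - t) + 0))) :=
      hTs.add (tendsto_const_nhds.add hC0)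
    have := le_of_tendsto_of_tendsto hTt hlim1 hle
    linarith

open Classical in
lemma Zfun_logconvex (hβ2 : 1 < β₂) (hβ : β₂ < β₀) (hL : 1 ≤ L) (hij : i ≤ j) (hjL : j ≤ L)
    (x y : ℝ) {a b : ℝ} (ha : 0 < a) (hb : 0 < b) (hab : a + b = 1) (n : ℕ) :
    Zfun β₀ β₂ (Hset i j L) (a * x + b * y) n ≤
      Zfun β₀ β₂ (Hset i j L) x n ^ a * Zfun β₀ β₂ (Hset i j L) y n ^ b := by
  have X0 : 0 < Zfun β₀ β₂ (Hset i j L) x n := Zfun_pos hβ2 hβ hL hij hjL x n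
  have Y0 : 0 < Zfun β₀ β₂ (Hset i j L) y n := Zfun_pos hβ2 hβ hL hij hjL y n
  set F : ℝ → (Fin n → Bool) → ℝ := fun r w =>
    if WordOccurs (Hset i j L) w then Real.exp (-(r * wE β₀ β₂ w)) else 0 with hF
  have hFnn : ∀ (r : ℝ) (w : Fin n → Bool), 0 ≤ F r w := by
    intro r w; simp only [hF]; split_ifs <;> positivity
  have hsum : ∀ r : ℝ, Zfun β₀ β₂ (Hset i j L) r n = ∑ w : Fin n → Bool, F r w := by
    intro r; rw [Zfun_eq β₀ β₂ (by linarith) hβ]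
  set X : ℝ := Zfun β₀ β₂ (Hset i j L) x n with hX
  set Y : ℝ := Zfun β₀ β₂ (Hset i j L) y n with hY
  have hXa : (0 : ℝ) < X ^ a := Real.rpow_pos_of_pos X0 a
  have hYb : (0 : ℝ) < Y ^ b := Real.rpow_pos_of_pos Y0 b
  rw [hsum]
  calc (∑ w : Fin n → Bool, F (a * x + b * y) w)
      = ∑ w : Fin n → Bool, F x w ^ a * F y w ^ b := by
        apply Finset.sum_congr rfl
        intro w _
        by_cases h : WordOccurs (Hset i j L) w
        · simp only [hF, if_pos h]
          rw [Real.rpow_def_of_pos (Real.exp_pos _), Real.rpow_def_of_pos (Real.exp_pos _),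
            Real.log_exp, Real.log_exp, ← Real.exp_add]
          congr 1
          ring
        · simp only [hF, if_neg h]
          rw [Real.zero_rpow ha.ne', Real.zero_rpow hb.ne', mul_zero]
    _ ≤ ∑ w : Fin n → Bool, (X ^ a * Y ^ b) * ((a / X) * F x w + (b / Y) * F y w) := by
        apply Finset.sum_le_sum
        intro w _
        have hgm := Real.geom_mean_le_arith_mean2_weighted ha.le hb.le
          (div_nonneg (hFnn x w) X0.le) (div_nonneg (hFnn y w) Y0.le) hab
        have heq : F x w ^ a * F y w ^ b =
            (X ^ a * Y ^ b) * ((F x w / X) ^ a * (F y w / Y) ^ b) := by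
          rw [Real.div_rpow (hFnn x w) X0.le, Real.div_rpow (hFnn y w) Y0.le]
          field_simp
        rw [heq]
        apply mul_le_mul_of_nonneg_left _ (by positivity)
        calc (F x w / X) ^ a * (F y w / Y) ^ b
            ≤ a * (F x w / X) + b * (F y w / Y) := hgm
          _ = (a / X) * F x w + (b / Y) * F y w := by ring
    _ = (X ^ a * Y ^ b) * ((a / X) * X + (b / Y) * Y) := by
        rw [← Finset.mul_sum]
        congr 1
        rw [Finset.sum_add_distrib, ← Finset.mul_sum, ← Finset.mul_sum, ← hsum x, ← hsum y]
    _ = X ^ a * Y ^ b := by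
        rw [div_mul_cancel₀ _ X0.ne', div_mul_cancel₀ _ Y0.ne', hab, mul_one]

lemma press_convex (hβ2 : 1 < β₂) (hβ : β₂ < β₀) (hL : 1 ≤ L) (hij : i ≤ j) (hjL : j ≤ L) :
    ConvexOn ℝ Set.univ (press β₀ β₂ i j L) := by
  refine ⟨convex_univ, ?_⟩
  intro x _ y _ a b ha hb hab
  simp only [smul_eq_mul]
  rcases eq_or_lt_of_le ha with ha0 | ha
  · rw [← ha0] at hab ⊢
    simp only [zero_mul, zero_add, one_mul] at hab ⊢
    rw [hab, one_mul, one_mul]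
  rcases eq_or_lt_of_le hb with hb0 | hb
  · rw [← hb0] at hab ⊢
    simp only [zero_mul, add_zero, mul_zero] at hab ⊢
    rw [hab, one_mul, one_mul]
  have hkey : ∀ n : ℕ, Real.log (Zfun β₀ β₂ (Hset i j L) (a * x + b * y) n) / n ≤
      a * (Real.log (Zfun β₀ β₂ (Hset i j L) x n) / n) +
      b * (Real.log (Zfun β₀ β₂ (Hset i j L) y n) / n) := by
    intro n
    have X0 : 0 < Zfun β₀ β₂ (Hset i j L) x n := Zfun_pos hβ2 hβ hL hij hjL x n
    have Y0 : 0 < Zfun β₀ β₂ (Hset i j L) y n := Zfun_pos hβ2 hβ hL hij hjL y n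
    have h := Zfun_logconvex hβ2 hβ hL hij hjL x y ha hb hab n
    have hlog : Real.log (Zfun β₀ β₂ (Hset i j L) (a * x + b * y) n) ≤
        a * Real.log (Zfun β₀ β₂ (Hset i j L) x n) +
        b * Real.log (Zfun β₀ β₂ (Hset i j L) y n) := by
      calc Real.log (Zfun β₀ β₂ (Hset i j L) (a * x + b * y) n)
          ≤ Real.log (Zfun β₀ β₂ (Hset i j L) x n ^ a * Zfun β₀ β₂ (Hset i j L) y n ^ b) :=
            Real.log_le_log (Zfun_pos hβ2 hβ hL hij hjL _ n) h
        _ = a * Real.log (Zfun β₀ β₂ (Hset i j L) x n) +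
            b * Real.log (Zfun β₀ β₂ (Hset i j L) y n) := by
            rw [Real.log_mul (Real.rpow_pos_of_pos X0 a).ne' (Real.rpow_pos_of_pos Y0 b).ne',
              Real.log_rpow X0, Real.log_rpow Y0]
    rcases Nat.eq_zero_or_pos n with hn | hn
    · subst hn; simp
    · have hn0 : (0 : ℝ) < (n : ℝ) := by exact_mod_cast hn
      rw [div_le_iff₀ hn0] at *
      calc Real.log (Zfun β₀ β₂ (Hset i j L) (a * x + b * y) n)
          ≤ a * Real.log (Zfun β₀ β₂ (Hset i j L) x n) +
            b * Real.log (Zfun β₀ β₂ (Hset i j L) y n) := hlog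
        _ = (a * (Real.log (Zfun β₀ β₂ (Hset i j L) x n) / n) +
            b * (Real.log (Zfun β₀ β₂ (Hset i j L) y n) / n)) * n := by
            field_simp
  have hT1 := press_tendsto hβ2 hβ hL hij hjL (a * x + b * y)
  have hTx := press_tendsto hβ2 hβ hL hij hjL x
  have hTy := press_tendsto hβ2 hβ hL hij hjL y
  have hT2 := (hTx.const_mul a).add (hTy.const_mul b)
  exact le_of_tendsto_of_tendsto hT1 hT2 (Filter.Eventually.of_forall hkey)

/-! ### one-sided derivatives of convex functions -/

lemma convexOn_hasLeftDeriv (f : ℝ → ℝ) (hf : ConvexOn ℝ Set.univ f) (x : ℝ) :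
    ∃ d : ℝ, HasDerivWithinAt f d (Set.Iio x) x := by
  have hsm := hf.slope_mono (Set.mem_univ x)
  have hmono : MonotoneOn (slope f x) (Set.Iio x) := fun u hu v hv huv =>
    hsm ⟨trivial, hu.ne⟩ ⟨trivial, hv.ne⟩ huv
  have hbdd : BddAbove (slope f x '' Set.Iio x) := by
    refine ⟨slope f x (x + 1), ?_⟩
    rintro _ ⟨u, hu, rfl⟩
    exact hsm ⟨trivial, hu.ne⟩ ⟨trivial, by norm_num⟩ (by simp only [Set.mem_Iio] at hu; linarith)
  exact ⟨_, (hasDerivWithinAt_iff_tendsto_slope' (by simp)).2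
    (hmono.tendsto_nhdsLT hbdd)⟩

lemma convexOn_hasRightDeriv (f : ℝ → ℝ) (hf : ConvexOn ℝ Set.univ f) (x : ℝ) :
    ∃ d : ℝ, HasDerivWithinAt f d (Set.Ioi x) x := by
  have hsm := hf.slope_mono (Set.mem_univ x)
  have hmono : MonotoneOn (slope f x) (Set.Ioi x) := fun u hu v hv huv =>
    hsm ⟨trivial, (ne_of_gt hu)⟩ ⟨trivial, (ne_of_gt hv)⟩ huv
  have hbdd : BddBelow (slope f x '' Set.Ioi x) := by
    refine ⟨slope f x (x - 1), ?_⟩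
    rintro _ ⟨u, hu, rfl⟩
    exact hsm ⟨trivial, by norm_num⟩ ⟨trivial, (ne_of_gt hu)⟩
      (by simp only [Set.mem_Ioi] at hu; linarith)
  exact ⟨_, (hasDerivWithinAt_iff_tendsto_slope' (by simp)).2
    (hmono.tendsto_nhdsGT hbdd)⟩

lemma hasDerivWithinAt_Iio_le {f : ℝ → ℝ} {x Dm A : ℝ}
    (hm : HasDerivWithinAt f Dm (Set.Iio x) x) (hA : ∀ y, y < x → slope f x y ≤ A) : Dm ≤ A :=
  le_of_tendsto ((hasDerivWithinAt_iff_tendsto_slope' (by simp)).1 hm)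
    (eventually_nhdsWithin_of_forall hA)

lemma hasDerivWithinAt_Ioi_ge {f : ℝ → ℝ} {x Dp A : ℝ}
    (hp : HasDerivWithinAt f Dp (Set.Ioi x) x) (hA : ∀ y, x < y → A ≤ slope f x y) : A ≤ Dp :=
  ge_of_tendsto ((hasDerivWithinAt_iff_tendsto_slope' (by simp)).1 hp)
    (eventually_nhdsWithin_of_forall hA)

lemma not_differentiableAt_of_sided {f : ℝ → ℝ} {x Dm Dp : ℝ}
    (hm : HasDerivWithinAt f Dm (Set.Iio x) x) (hp : HasDerivWithinAt f Dp (Set.Ioi x) x)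
    (hlt : Dm < Dp) : ¬ DifferentiableAt ℝ f x := by
  intro hd
  have hD := hd.hasDerivAt
  have h1 : Filter.Tendsto (slope f x) (nhdsWithin x (Set.Iio x)) (nhds Dm) :=
    (hasDerivWithinAt_iff_tendsto_slope' (by simp)).1 hm
  have h1' : Filter.Tendsto (slope f x) (nhdsWithin x (Set.Iio x)) (nhds (deriv f x)) :=
    (hasDerivWithinAt_iff_tendsto_slope' (by simp)).1 (hD.hasDerivWithinAt (s := Set.Iio x))
  have h2 : Filter.Tendsto (slope f x) (nhdsWithin x (Set.Ioi x)) (nhds Dp) :=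
    (hasDerivWithinAt_iff_tendsto_slope' (by simp)).1 hp
  have h2' : Filter.Tendsto (slope f x) (nhdsWithin x (Set.Ioi x)) (nhds (deriv f x)) :=
    (hasDerivWithinAt_iff_tendsto_slope' (by simp)).1 (hD.hasDerivWithinAt (s := Set.Ioi x))
  have e1 : Dm = deriv f x := tendsto_nhds_unique h1 h1'
  have e2 : Dp = deriv f x := tendsto_nhds_unique h2 h2'
  rw [e1, e2] at hlt
  exact lt_irrefl _ hlt

lemma continuous_of_slope_bounds {f : ℝ → ℝ} {A B : ℝ}
    (h : ∀ t s : ℝ, t ≤ s → A * (s - t) ≤ f t - f s ∧ f t - f s ≤ B * (s - t)) :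
    Continuous f := by
  have key : ∀ x y : ℝ, x ≤ y → |f x - f y| ≤ (|A| + |B|) * |x - y| := by
    intro x y hxy
    obtain ⟨h1, h2⟩ := h x y hxy
    have hyx0 : (0:ℝ) ≤ y - x := sub_nonneg.2 hxy
    rw [show |x - y| = y - x from by rw [abs_sub_comm]; exact abs_of_nonneg hyx0, abs_le]
    constructor
    · nlinarith [mul_le_mul_of_nonneg_right (neg_abs_le A) hyx0,
        mul_nonneg (abs_nonneg B) hyx0]
    · nlinarith [mul_le_mul_of_nonneg_right (le_abs_self B) hyx0,
        mul_nonneg (abs_nonneg A) hyx0]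
  have key2 : ∀ x y : ℝ, |f x - f y| ≤ (|A| + |B|) * |x - y| := by
    intro x y
    rcases le_total x y with hxy | hxy
    · exact key x y hxy
    · rw [abs_sub_comm, abs_sub_comm x y]
      exact key y x hxy
  apply LipschitzWith.continuous (K := Real.toNNReal (|A| + |B|))
  apply LipschitzWith.of_dist_le_mul
  intro x y
  rw [Real.dist_eq, Real.dist_eq, Real.coe_toNNReal _ (by positivity)]
  exact key2 x y

lemma Acoef_anti {β₀ β₂ : ℝ} (hβ2 : 1 < β₂) (hβ : β₂ < β₀) {c c' LL : ℕ} (hL : 1 ≤ LL)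
    (hcc : c ≤ c') (hc'L : c' ≤ LL) : Acoef β₀ β₂ c' LL ≤ Acoef β₀ β₂ c LL := by
  have hL0 : (0:ℝ) < (LL:ℝ) := by exact_mod_cast hL
  have l2 : 0 < Real.log β₂ := Real.log_pos hβ2
  have l0 : Real.log β₂ < Real.log β₀ := Real.log_lt_log (by linarith) hβ
  have hcL : c ≤ LL := le_trans hcc hc'L
  unfold Acoef
  rw [Nat.cast_sub hcL, Nat.cast_sub hc'L]
  have hccr : (c:ℝ) ≤ (c':ℝ) := by exact_mod_cast hcc
  gcongr ?_ / _
  nlinarith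

/-- Proposition `p:main`: under the cone hypotheses on the subshifts
`H_ℓ = H(i_ℓ,j_ℓ,L_ℓ)` — entropies strictly decreasing, slope intervals pairwise
disjoint and crossing intervals ordered — the pressures `P_ℓ(t)` exist, and there are
parameters `t_{k-1} < ⋯ < t₁ < 0` such that `ℙ = max_ℓ P_ℓ` equals the (strictly
maximal) pressure `P_ℓ` on each interval of the induced partition, and at each `t_ℓ`
the one-sided derivatives of `ℙ` satisfy `D⁻ℙ(t_ℓ) ≤ −a_{ℓ+1}⁻ < −a_ℓ⁺ ≤ D⁺ℙ(t_ℓ)`;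
in particular `ℙ` is not differentiable at `t₁, …, t_{k−1}`. -/
theorem pressure_phase_transitions
    (k : ℕ) (hk : 2 ≤ k) (β₀ β₂ : ℝ) (hβ2 : 1 < β₂) (hβ : β₂ < β₀)
    (i j L : ℕ → ℕ)
    (hL : ∀ ℓ, 1 ≤ ℓ → ℓ ≤ k → 1 ≤ L ℓ)
    (hij : ∀ ℓ, 1 ≤ ℓ → ℓ ≤ k → i ℓ < j ℓ ∧ j ℓ ≤ L ℓ)
    (am ap : ℕ → ℝ)
    (ham : ∀ ℓ, am ℓ =
      ((j ℓ : ℝ) * Real.log β₂ + ((L ℓ - j ℓ : ℕ) : ℝ) * Real.log β₀) / (L ℓ : ℝ))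
    (hap : ∀ ℓ, ap ℓ =
      ((i ℓ : ℝ) * Real.log β₂ + ((L ℓ - i ℓ : ℕ) : ℝ) * Real.log β₀) / (L ℓ : ℝ))
    (P : ℕ → ℝ → ℝ)
    (hPdef : ∀ ℓ, P ℓ = pressureOf β₀ β₂ (Hset (i ℓ) (j ℓ) (L ℓ)))
    (hh : ℕ → ℝ) (hhdef : ∀ ℓ, hh ℓ = P ℓ 0)
    (τm τp : ℕ → ℝ)
    (hτm : ∀ ℓ, τm ℓ = -(hh ℓ - hh (ℓ + 1)) / (am (ℓ + 1) - ap ℓ))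
    (hτp : ∀ ℓ, τp ℓ = -(hh ℓ - hh (ℓ + 1)) / (ap (ℓ + 1) - am ℓ))
    (hhmono : ∀ ℓ, 1 ≤ ℓ → ℓ < k → hh (ℓ + 1) < hh ℓ)
    (hamono : ∀ ℓ, 1 ≤ ℓ → ℓ < k → ap ℓ < am (ℓ + 1))
    (hτ : ∀ ℓ, 1 ≤ ℓ → ℓ + 1 < k → τp (ℓ + 1) < τm ℓ)
    (Q : ℝ → ℝ)
    (hQ : ∀ t, Q t = ⨆ ℓ : (Set.Icc 1 k : Set ℕ), P ℓ t) :
    -- the pressures exist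
    (∀ ℓ, 1 ≤ ℓ → ℓ ≤ k → ∀ t : ℝ,
      Tendsto (fun n : ℕ => Real.log (Zfun β₀ β₂ (Hset (i ℓ) (j ℓ) (L ℓ)) t n) / n)
        atTop (nhds (P ℓ t))) ∧
    -- the phase-transition parameters
    ∃ T : ℕ → ℝ,
      (∀ ℓ, 1 ≤ ℓ → ℓ + 1 ≤ k - 1 → T (ℓ + 1) < T ℓ) ∧
      T 1 < 0 ∧
      -- (i)
      (∀ t, T 1 < t →
        Q t = P 1 t ∧ ∀ m, 1 ≤ m → m ≤ k → m ≠ 1 → P m t < P 1 t) ∧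
      -- (ii)
      (∀ ℓ, 2 ≤ ℓ → ℓ ≤ k - 1 → ∀ t, T ℓ < t → t < T (ℓ - 1) →
        Q t = P ℓ t ∧ ∀ m, 1 ≤ m → m ≤ k → m ≠ ℓ → P m t < P ℓ t) ∧
      -- (iii)
      (∀ t, t < T (k - 1) →
        Q t = P k t ∧ ∀ m, 1 ≤ m → m ≤ k → m ≠ k → P m t < P k t) ∧
      -- (iv)
      (∀ ℓ, 1 ≤ ℓ → ℓ ≤ k - 1 →
        ∃ Dm Dp : ℝ,
          HasDerivWithinAt Q Dm (Set.Iio (T ℓ)) (T ℓ) ∧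
          HasDerivWithinAt Q Dp (Set.Ioi (T ℓ)) (T ℓ) ∧
          Dm ≤ -(am (ℓ + 1)) ∧ -(am (ℓ + 1)) < -(ap ℓ) ∧ -(ap ℓ) ≤ Dp ∧
          ¬ DifferentiableAt ℝ Q (T ℓ)) := by
  classical
  have hk1 : 1 ≤ k - 1 := by omega
  have hPfun : ∀ ℓ, P ℓ = press β₀ β₂ (i ℓ) (j ℓ) (L ℓ) := fun ℓ => by rw [hPdef ℓ]; rfl
  have hamA : ∀ ℓ, am ℓ = Acoef β₀ β₂ (j ℓ) (L ℓ) := fun ℓ => (ham ℓ).trans rfl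
  have hapA : ∀ ℓ, ap ℓ = Acoef β₀ β₂ (i ℓ) (L ℓ) := fun ℓ => (hap ℓ).trans rfl
  have htend : ∀ ℓ, 1 ≤ ℓ → ℓ ≤ k → ∀ t : ℝ,
      Tendsto (fun n : ℕ => Real.log (Zfun β₀ β₂ (Hset (i ℓ) (j ℓ) (L ℓ)) t n) / n)
        atTop (nhds (P ℓ t)) := by
    intro ℓ h1 h2 t
    rw [hPfun ℓ]
    exact press_tendsto hβ2 hβ (hL ℓ h1 h2) (hij ℓ h1 h2).1.le (hij ℓ h1 h2).2 t
  have hsl : ∀ ℓ, 1 ≤ ℓ → ℓ ≤ k → ∀ t s : ℝ, t ≤ s →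
      am ℓ * (s - t) ≤ P ℓ t - P ℓ s ∧ P ℓ t - P ℓ s ≤ ap ℓ * (s - t) := by
    intro ℓ h1 h2 t s hts
    rw [hPfun ℓ, hamA ℓ, hapA ℓ]
    exact press_slope hβ2 hβ (hL ℓ h1 h2) (hij ℓ h1 h2).1.le
      (le_trans (hij ℓ h1 h2).1.le (hij ℓ h1 h2).2) (hij ℓ h1 h2).2 hts
  have hconv : ∀ ℓ, 1 ≤ ℓ → ℓ ≤ k → ConvexOn ℝ Set.univ (P ℓ) := by
    intro ℓ h1 h2
    rw [hPfun ℓ]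
    exact press_convex hβ2 hβ (hL ℓ h1 h2) (hij ℓ h1 h2).1.le (hij ℓ h1 h2).2
  have hcont : ∀ ℓ, 1 ≤ ℓ → ℓ ≤ k → Continuous (P ℓ) := fun ℓ h1 h2 =>
    continuous_of_slope_bounds (hsl ℓ h1 h2)
  have haa : ∀ ℓ, 1 ≤ ℓ → ℓ ≤ k → am ℓ ≤ ap ℓ := by
    intro ℓ h1 h2
    rw [hamA ℓ, hapA ℓ]
    exact Acoef_anti hβ2 hβ (hL ℓ h1 h2) (hij ℓ h1 h2).1.le (hij ℓ h1 h2).2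
  have hstrict : ∀ ℓ, 1 ≤ ℓ → ℓ < k → ∀ t s : ℝ, t < s →
      P (ℓ+1) s - P ℓ s < P (ℓ+1) t - P ℓ t := by
    intro ℓ h1 h2 t s hts
    have hA := (hsl (ℓ+1) (by omega) (by omega) t s hts.le).1
    have hB := (hsl ℓ h1 (by omega) t s hts.le).2
    have hgap := hamono ℓ h1 h2
    nlinarith [mul_pos (sub_pos.2 hgap) (sub_pos.2 hts)]
  have hex : ∀ ℓ, 1 ≤ ℓ → ℓ ≤ k - 1 → ∃ z : ℝ, P (ℓ+1) z = P ℓ z ∧ τm ℓ ≤ z ∧ z ≤ τp ℓ ∧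
      z < 0 ∧ (∀ t, z < t → P (ℓ+1) t < P ℓ t) ∧ (∀ t, t < z → P ℓ t < P (ℓ+1) t) := by
    intro ℓ h1 h2
    have hℓk : ℓ < k := by omega
    have hℓ1 : 1 ≤ ℓ + 1 := by omega
    have hℓ1k : ℓ + 1 ≤ k := by omega
    have hΔ : 0 < hh ℓ - hh (ℓ+1) := sub_pos.2 (hhmono ℓ h1 hℓk)
    have hgap : ap ℓ < am (ℓ+1) := hamono ℓ h1 hℓk
    have hd1 : 0 < am (ℓ+1) - ap ℓ := sub_pos.2 hgap
    have hd2 : 0 < ap (ℓ+1) - am ℓ := by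
      have h5 := haa ℓ h1 hℓk.le
      have h6 := haa (ℓ+1) hℓ1 hℓ1k
      linarith
    have hτm_neg : τm ℓ < 0 := by
      rw [hτm ℓ]
      exact div_neg_of_neg_of_pos (by linarith) hd1
    have hτp_neg : τp ℓ < 0 := by
      rw [hτp ℓ]
      exact div_neg_of_neg_of_pos (by linarith) hd2
    have hg0 : P (ℓ+1) 0 - P ℓ 0 < 0 := by
      rw [← hhdef ℓ, ← hhdef (ℓ+1)]
      linarith
    have hgτm : 0 ≤ P (ℓ+1) (τm ℓ) - P ℓ (τm ℓ) := by
      have hA := (hsl (ℓ+1) hℓ1 hℓ1k (τm ℓ) 0 hτm_neg.le).1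
      have hB := (hsl ℓ h1 hℓk.le (τm ℓ) 0 hτm_neg.le).2
      have hτval : (am (ℓ+1) - ap ℓ) * (0 - τm ℓ) = hh ℓ - hh (ℓ+1) := by
        rw [hτm ℓ]
        field_simp
        ring
      rw [hhdef ℓ, hhdef (ℓ+1)] at hτval
      nlinarith
    have hgτp : P (ℓ+1) (τp ℓ) - P ℓ (τp ℓ) ≤ 0 := by
      have hA := (hsl (ℓ+1) hℓ1 hℓ1k (τp ℓ) 0 hτp_neg.le).2
      have hB := (hsl ℓ h1 hℓk.le (τp ℓ) 0 hτp_neg.le).1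
      have hτval : (ap (ℓ+1) - am ℓ) * (0 - τp ℓ) = hh ℓ - hh (ℓ+1) := by
        rw [hτp ℓ]
        field_simp
        ring
      rw [hhdef ℓ, hhdef (ℓ+1)] at hτval
      nlinarith
    have hgc : Continuous (fun t => P (ℓ+1) t - P ℓ t) :=
      (hcont (ℓ+1) hℓ1 hℓ1k).sub (hcont ℓ h1 hℓk.le)
    have hmem : (0:ℝ) ∈ Set.Icc ((fun t => P (ℓ+1) t - P ℓ t) 0)
        ((fun t => P (ℓ+1) t - P ℓ t) (τm ℓ)) := ⟨hg0.le, hgτm⟩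
    obtain ⟨z, hzI, hz0⟩ := intermediate_value_Icc' hτm_neg.le hgc.continuousOn hmem
    have hanti := hstrict ℓ h1 hℓk
    simp only at hz0
    have hzne : z < 0 := by
      rcases eq_or_lt_of_le hzI.2 with rfl | h
      · exact absurd hz0 (by linarith)
      · exact h
    refine ⟨z, by linarith [hz0], hzI.1, ?_, hzne, ?_, ?_⟩
    · by_contra hcon
      push_neg at hcon
      have := hanti (τp ℓ) z hcon
      linarith
    · intro t ht
      have := hanti z t ht
      linarith
    · intro t ht
      have := hanti t z ht
      linarith
  obtain ⟨T, hTspec⟩ : ∃ T : ℕ → ℝ, ∀ ℓ, 1 ≤ ℓ → ℓ ≤ k - 1 →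
      P (ℓ+1) (T ℓ) = P ℓ (T ℓ) ∧ τm ℓ ≤ T ℓ ∧ T ℓ ≤ τp ℓ ∧ T ℓ < 0 ∧
      (∀ t, T ℓ < t → P (ℓ+1) t < P ℓ t) ∧ (∀ t, t < T ℓ → P ℓ t < P (ℓ+1) t) := by
    refine ⟨fun ℓ => if h : 1 ≤ ℓ ∧ ℓ ≤ k - 1 then (hex ℓ h.1 h.2).choose else 0, ?_⟩
    intro ℓ h1 h2
    simp only [dif_pos (show 1 ≤ ℓ ∧ ℓ ≤ k - 1 from ⟨h1, h2⟩)]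
    exact (hex ℓ h1 h2).choose_spec
  have hTstep : ∀ ℓ, 1 ≤ ℓ → ℓ + 1 ≤ k - 1 → T (ℓ+1) < T ℓ := by
    intro ℓ h1 h2
    have e1 := (hTspec (ℓ+1) (by omega) h2).2.2.1
    have e2 := (hTspec ℓ h1 (by omega)).2.1
    have e3 := hτ ℓ h1 (by omega)
    linarith
  have hTmono : ∀ a b, 1 ≤ a → a ≤ b → b ≤ k - 1 → T b ≤ T a := by
    intro a b h1 hab
    induction b, hab using Nat.le_induction with
    | base => intro _; exact le_rfl
    | succ b hab ih =>
        intro h2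
        have := hTstep b (by omega) h2
        have := ih (by omega)
        linarith
  have hT1neg : T 1 < 0 := (hTspec 1 le_rfl hk1).2.2.2.1
  have chainR : ∀ ℓ, 1 ≤ ℓ → ℓ ≤ k - 1 → ∀ m, ℓ < m → m ≤ k → ∀ t, T ℓ < t →
      P m t < P ℓ t := by
    intro ℓ h1 h2 m hm
    have hm' : ℓ + 1 ≤ m := hm
    induction m, hm' using Nat.le_induction with
    | base => intro _ t ht; exact (hTspec ℓ h1 h2).2.2.2.2.1 t ht
    | succ m hm ih =>
        intro hmk t ht
        have hm1 : 1 ≤ m := by omega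
        have hmk1 : m ≤ k - 1 := by omega
        have hTm : T m < t := lt_of_le_of_lt (hTmono ℓ m h1 (by omega) hmk1) ht
        exact lt_trans ((hTspec m hm1 hmk1).2.2.2.2.1 t hTm) (ih (by omega) (by omega) t ht)
  have chainL : ∀ m, 1 ≤ m → ∀ ℓ, m ≤ ℓ → ℓ ≤ k - 1 → ∀ t, t < T ℓ →
      P m t < P (ℓ+1) t := by
    intro m hm1 ℓ hmℓ
    induction ℓ, hmℓ using Nat.le_induction with
    | base => intro h2 t ht; exact (hTspec m hm1 h2).2.2.2.2.2 t ht
    | succ b hmb ih =>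
        intro h2 t ht
        have hb1 : 1 ≤ b := le_trans hm1 hmb
        have htb : t < T b := lt_trans ht (hTstep b hb1 h2)
        exact lt_trans (ih (by omega) t htb) ((hTspec (b+1) (by omega) h2).2.2.2.2.2 t ht)
  haveI instN : Nonempty ↥(Set.Icc 1 k : Set ℕ) := ⟨⟨1, Set.mem_Icc.2 ⟨le_rfl, by omega⟩⟩⟩
  haveI instF : Finite ↥(Set.Icc 1 k : Set ℕ) := (Set.finite_Icc 1 k).to_subtype
  have hQmax : ∀ (t : ℝ) (ℓ0 : ℕ), 1 ≤ ℓ0 → ℓ0 ≤ k →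
      (∀ m, 1 ≤ m → m ≤ k → P m t ≤ P ℓ0 t) → Q t = P ℓ0 t := by
    intro t ℓ0 h1 h2 hb
    rw [hQ t]
    apply le_antisymm
    · apply ciSup_le
      rintro ⟨m, hm⟩
      rw [Set.mem_Icc] at hm
      exact hb m hm.1 hm.2
    · exact le_ciSup (f := fun ℓ : ↥(Set.Icc 1 k : Set ℕ) => P (↑ℓ) t)
        (Set.Finite.bddAbove (Set.finite_range _))
        (⟨ℓ0, Set.mem_Icc.2 ⟨h1, h2⟩⟩ : ↥(Set.Icc 1 k : Set ℕ))
  have stI : ∀ t, T 1 < t → Q t = P 1 t ∧ ∀ m, 1 ≤ m → m ≤ k → m ≠ 1 → P m t < P 1 t := by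
    intro t ht
    have hlt : ∀ m, 1 ≤ m → m ≤ k → m ≠ 1 → P m t < P 1 t := fun m h1 h2 h3 =>
      chainR 1 le_rfl hk1 m (by omega) h2 t ht
    refine ⟨hQmax t 1 le_rfl (by omega) ?_, hlt⟩
    intro m h1 h2
    rcases eq_or_ne m 1 with rfl | h
    · exact le_rfl
    · exact (hlt m h1 h2 h).le
  have stII : ∀ ℓ, 2 ≤ ℓ → ℓ ≤ k - 1 → ∀ t, T ℓ < t → t < T (ℓ - 1) →
      Q t = P ℓ t ∧ ∀ m, 1 ≤ m → m ≤ k → m ≠ ℓ → P m t < P ℓ t := by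
    intro ℓ h2ℓ hℓk t ht1 ht2
    have h1ℓ : 1 ≤ ℓ := by omega
    have hlt : ∀ m, 1 ≤ m → m ≤ k → m ≠ ℓ → P m t < P ℓ t := by
      intro m hm1 hmk hne
      rcases lt_or_gt_of_ne hne with hlt' | hgt
      · have := chainL m hm1 (ℓ-1) (by omega) (by omega) t ht2
        rwa [show ℓ - 1 + 1 = ℓ from by omega] at this
      · exact chainR ℓ h1ℓ hℓk m hgt hmk t ht1
    refine ⟨hQmax t ℓ h1ℓ (by omega) ?_, hlt⟩
    intro m h1 h2
    rcases eq_or_ne m ℓ with rfl | h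
    · exact le_rfl
    · exact (hlt m h1 h2 h).le
  have stIII : ∀ t, t < T (k - 1) → Q t = P k t ∧
      ∀ m, 1 ≤ m → m ≤ k → m ≠ k → P m t < P k t := by
    intro t ht
    have hlt : ∀ m, 1 ≤ m → m ≤ k → m ≠ k → P m t < P k t := by
      intro m h1 h2 h3
      have := chainL m h1 (k-1) (by omega) le_rfl t ht
      rwa [show k - 1 + 1 = k from by omega] at this
    refine ⟨hQmax t k (by omega) le_rfl ?_, hlt⟩
    intro m h1 h2
    rcases eq_or_ne m k with rfl | h
    · exact le_rfl
    · exact (hlt m h1 h2 h).le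
  have stIV : ∀ ℓ, 1 ≤ ℓ → ℓ ≤ k - 1 →
      ∃ Dm Dp : ℝ,
        HasDerivWithinAt Q Dm (Set.Iio (T ℓ)) (T ℓ) ∧
        HasDerivWithinAt Q Dp (Set.Ioi (T ℓ)) (T ℓ) ∧
        Dm ≤ -(am (ℓ + 1)) ∧ -(am (ℓ + 1)) < -(ap ℓ) ∧ -(ap ℓ) ≤ Dp ∧
        ¬ DifferentiableAt ℝ Q (T ℓ) := by
    intro ℓ h1 h2
    have hℓk : ℓ ≤ k := by omega
    have hℓ1 : 1 ≤ ℓ + 1 := by omega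
    have hℓ1k : ℓ + 1 ≤ k := by omega
    obtain ⟨Dm, hDm⟩ := convexOn_hasLeftDeriv (P (ℓ+1)) (hconv (ℓ+1) hℓ1 hℓ1k) (T ℓ)
    obtain ⟨Dp, hDp⟩ := convexOn_hasRightDeriv (P ℓ) (hconv ℓ h1 hℓk) (T ℓ)
    have heqx := (hTspec ℓ h1 h2).1
    have hQx : Q (T ℓ) = P ℓ (T ℓ) := by
      apply hQmax (T ℓ) ℓ h1 hℓk
      intro m hm1 hmk
      rcases lt_trichotomy m ℓ with hc | hc | hc
      · have hxlt : T ℓ < T (ℓ-1) := by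
          have := hTstep (ℓ-1) (by omega) (by rw [show ℓ - 1 + 1 = ℓ from by omega]; exact h2)
          rwa [show ℓ - 1 + 1 = ℓ from by omega] at this
        have := chainL m hm1 (ℓ-1) (by omega) (by omega) (T ℓ) hxlt
        rw [show ℓ - 1 + 1 = ℓ from by omega] at this
        exact this.le
      · rw [hc]
      · rcases eq_or_lt_of_le (show ℓ + 1 ≤ m from hc) with hc' | hc'
        · rw [← hc']
          exact heqx.le
        · have hT1 : T (ℓ+1) < T ℓ := hTstep ℓ h1 (by omega)
          have := chainR (ℓ+1) hℓ1 (by omega) m hc' hmk (T ℓ) hT1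
          linarith [heqx]
    have hQx2 : Q (T ℓ) = P (ℓ+1) (T ℓ) := hQx.trans heqx.symm
    have hleft : Q =ᶠ[nhdsWithin (T ℓ) (Set.Iio (T ℓ))] P (ℓ+1) := by
      rcases eq_or_lt_of_le h2 with hek | hlt2
      · apply eventually_nhdsWithin_of_forall
        intro y hy
        rw [Set.mem_Iio] at hy
        have := (stIII y (by rw [← hek]; exact hy)).1
        rw [this, show ℓ + 1 = k from by omega]
      · have hT1 : T (ℓ+1) < T ℓ := hTstep ℓ h1 (by omega)
        filter_upwards [Ioo_mem_nhdsLT hT1] with y hy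
        exact (stII (ℓ+1) (by omega) (by omega) y hy.1
          (by rw [show ℓ + 1 - 1 = ℓ from by omega]; exact hy.2)).1
    have hright : Q =ᶠ[nhdsWithin (T ℓ) (Set.Ioi (T ℓ))] P ℓ := by
      rcases eq_or_lt_of_le h1 with he1 | hgt1
      · apply eventually_nhdsWithin_of_forall
        intro y hy
        rw [Set.mem_Ioi] at hy
        rw [← he1] at hy ⊢
        exact (stI y hy).1
      · have hT1 : T ℓ < T (ℓ-1) := by
          have := hTstep (ℓ-1) (by omega) (by rw [show ℓ - 1 + 1 = ℓ from by omega]; exact h2)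
          rwa [show ℓ - 1 + 1 = ℓ from by omega] at this
        filter_upwards [Ioo_mem_nhdsGT hT1] with y hy
        exact (stII ℓ (by omega) h2 y hy.1 hy.2).1
    have hQm : HasDerivWithinAt Q Dm (Set.Iio (T ℓ)) (T ℓ) :=
      hDm.congr_of_eventuallyEq hleft hQx2
    have hQp : HasDerivWithinAt Q Dp (Set.Ioi (T ℓ)) (T ℓ) :=
      hDp.congr_of_eventuallyEq hright hQx
    have hb1 : Dm ≤ -(am (ℓ+1)) := by
      apply hasDerivWithinAt_Iio_le hDm
      intro y hy
      rw [slope_def_field, div_le_iff_of_neg (by linarith : y - T ℓ < 0)]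
      have := (hsl (ℓ+1) hℓ1 hℓ1k y (T ℓ) hy.le).1
      linarith
    have hb3 : -(ap ℓ) ≤ Dp := by
      apply hasDerivWithinAt_Ioi_ge hDp
      intro y hy
      rw [slope_def_field, le_div_iff₀ (by linarith : (0:ℝ) < y - T ℓ)]
      have := (hsl ℓ h1 hℓk (T ℓ) y hy.le).2
      linarith
    have hb2 : -(am (ℓ + 1)) < -(ap ℓ) := neg_lt_neg (hamono ℓ h1 (by omega))
    exact ⟨Dm, Dp, hQm, hQp, hb1, hb2, hb3,
      not_differentiableAt_of_sided hQm hQp (by linarith)⟩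
  exact ⟨htend, T, hTstep, hT1neg, stI, stII, stIII, stIV⟩
end PressureFacts
end
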